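/- For every clustering C of V and every vertex u ∈ V, the negative-side fractional cost satisfies S^- := Σ_{v ∈ N_u^-} (1 − d_uv) ≤ 5 · max_{z ∈ V} y_C(z). In particular, taking C to be an optimal clustering, S^- ≤ 5 · OPT. -/

import Mathlib

open Finset

/-- Positive neighborhood of `u`. -/
def Np {V : Type*} [Fintype V] (pos : V → V → Bool) (u : V) : Finset V :=
  Finset.univ.filter (fun v => pos u v)

/-- Negative neighborhood of `u`. -/
def Nm {V : Type*} [Fintype V] (pos : V → V → Bool) (u : V) : Finset V :=
  Finset.univ.filter (fun v => ¬ pos u v)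

/-- The correlation metric. -/
noncomputable def corrDist {V : Type*} [Fintype V] [DecidableEq V]
    (pos : V → V → Bool) (u v : V) : ℝ :=
  1 - ((Np pos u ∩ Np pos v).card : ℝ) /
      ((Fintype.card V : ℝ) - ((Nm pos u ∩ Nm pos v).card : ℝ))

/-- Number of disagreements incident to `u` under the clustering `C`. -/
def yC {V : Type*} [Fintype V] [DecidableEq V] (pos : V → V → Bool) (C : V → ℕ) (u : V) : ℕ :=
  (Finset.univ.filter (fun v => v ≠ u ∧
    ((pos u v ∧ C u ≠ C v) ∨ (¬ (pos u v) ∧ C u = C v)))).card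

/-- Optimal value of the Min Max correlation clustering objective. -/
noncomputable def OPT {V : Type*} [Fintype V] [DecidableEq V] (pos : V → V → Bool) : ℕ :=
  sInf { k : ℕ | ∃ C : V → ℕ, k = Finset.univ.sup (yC pos C) }

/-- `d̂`. -/
noncomputable def dhat {V : Type*} [Fintype V] [DecidableEq V]
    (pos : V → V → Bool) (u v : V) : ℝ :=
  if pos u v then corrDist pos u v else 1 - corrDist pos u v

/-- number of samples. -/
noncomputable def mSample (V : Type*) [Fintype V] (ε : ℝ) : ℕ :=
  ⌈(32 / ε ^ 2) * Real.log (Fintype.card V)⌉₊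

/-- Sample space: one subset of `N_u^+` of size `min m |N_u^+|` per vertex `u`. -/
abbrev SampleSpace {V : Type*} [Fintype V] [DecidableEq V]
    (pos : V → V → Bool) (m : ℕ) : Type _ :=
  ∀ u : V, {s : Finset V // s ⊆ Np pos u ∧ s.card = min m (Np pos u).card}

/-- Uniform probability of an event over a finite sample space. -/
noncomputable def prob {Ω : Type*} [Fintype Ω] (E : Set Ω) : ℝ :=
  (E.ncard : ℝ) / (Fintype.card Ω : ℝ)

noncomputable def West {V : Type*} [Fintype V] [DecidableEq V]
    (pos : V → V → Bool) {m : ℕ} (ω : SampleSpace pos m) (u v : V) : ℝ :=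
  if m ≤ (Np pos u).card then
    ((Np pos u).card : ℝ) / m * (((ω u).1 ∩ Np pos v).card : ℝ)
  else ((Np pos u ∩ Np pos v).card : ℝ)

noncomputable def Yest {V : Type*} [Fintype V] [DecidableEq V]
    (pos : V → V → Bool) {m : ℕ} (ω : SampleSpace pos m) (u v : V) : ℝ :=
  if m ≤ (Np pos u).card then
    ((Np pos u).card : ℝ) / m * (((ω u).1 ∩ Nm pos v).card : ℝ)
  else ((Np pos u ∩ Nm pos v).card : ℝ)

/-- Initial estimate of the correlation metric for a pair labeled with `|N_v^+| ≥ |N_u^+|`. -/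
noncomputable def dbar {V : Type*} [Fintype V] [DecidableEq V]
    (pos : V → V → Bool) {m : ℕ} (ω : SampleSpace pos m) (u v : V) : ℝ :=
  (Yest pos ω u v + Yest pos ω v u) / (((Np pos u).card : ℝ) + Yest pos ω v u)

/-- Initial estimate, with the pair relabeled so the vertex with larger
positive neighborhood comes second. -/
noncomputable def dbarS {V : Type*} [Fintype V] [DecidableEq V]
    (pos : V → V → Bool) {m : ℕ} (ω : SampleSpace pos m) (u v : V) : ℝ :=
  if (Np pos u).card ≤ (Np pos v).card then dbar pos ω u v else dbar pos ω v u

noncomputable def cc1 (ε : ℝ) : ℝ := (1 + ε) / (1 - ε)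
noncomputable def hh1 (ε : ℝ) : ℝ := 2 * ε / (1 - ε)
noncomputable def cc2 (ε : ℝ) : ℝ := (1 + ε) / (1 - ε)
noncomputable def hh2 (ε : ℝ) : ℝ := 2 * ε / (1 - ε)
noncomputable def cc3 (ε : ℝ) : ℝ := ((1 + ε) / (1 - ε)) ^ 2
noncomputable def hh3 (ε : ℝ) : ℝ := (2 * ε / (1 - ε)) * (1 + 2 * (1 + ε) / (1 - ε))
noncomputable def cc4 (ε : ℝ) : ℝ := (2 * cc3 ε + 1) * cc3 ε
noncomputable def hh4 (ε : ℝ) : ℝ := (4 * cc3 ε + 1) * (2 * cc3 ε + 1) * hh3 ε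
noncomputable def DD (ε : ℝ) : ℝ := 2 * cc3 ε

/-- Post-processed estimate. -/
noncomputable def dtilde {V : Type*} [Fintype V] [DecidableEq V] (ε : ℝ)
    (pos : V → V → Bool) {m : ℕ} (ω : SampleSpace pos m) (u v : V) : ℝ :=
  if pos u v ∧ dbarS pos ω u v ≤ 2 * hh3 ε then 0
  else if ¬ (pos u v) ∧ 1 / (2 * cc3 ε + 1) ≤ dbarS pos ω u v then 1
  else dbarS pos ω u v

/-- The radius `r(δ₁, δ₂)` from Appendix B. -/
noncomputable def rr (δ1 δ2 : ℝ) : ℝ :=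
  (1 - δ2 - δ1 * δ2 - δ1 ^ 2 * δ2 - δ1 ^ 3 * δ2) /
    (δ1 ^ 2 + δ1 ^ 3 * (δ1 + 1) + δ1 + 1)

noncomputable def c1const (δ1 δ2 : ℝ) : ℝ := δ1 + δ2 / rr δ1 δ2
noncomputable def bconst (δ1 δ2 : ℝ) : ℝ := (c1const δ1 δ2 + 1) * δ1 + δ2 / rr δ1 δ2
noncomputable def c2const (δ1 δ2 : ℝ) : ℝ := δ1 * (bconst δ1 δ2 + 1) + δ2 / rr δ1 δ2

section Helpers
variable {V : Type*} [Fintype V] [DecidableEq V]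

omit [DecidableEq V] in
lemma mem_Np_iff (pos : V → V → Bool) {u v : V} : v ∈ Np pos u ↔ pos u v = true := by
  simp [Np]

omit [DecidableEq V] in
lemma mem_Nm_iff (pos : V → V → Bool) {u v : V} : v ∈ Nm pos u ↔ ¬ pos u v = true := by
  simp [Nm]

lemma card_le_yC (pos : V → V → Bool) (C : V → ℕ) (w : V) {S : Finset V}
    (hS : ∀ v ∈ S, v ≠ w ∧ ((pos w v = true ∧ C w ≠ C v) ∨ (¬ pos w v = true ∧ C w = C v))) :
    S.card ≤ yC pos C w := by
  apply Finset.card_le_card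
  intro v hv
  simp only [yC, Finset.mem_filter, Finset.mem_univ, true_and]
  exact hS v hv


lemma one_sub_corrDist (pos : V → V → Bool) (u v : V) :
    1 - corrDist pos u v
      = ((Np pos u ∩ Np pos v).card : ℝ) / ((Np pos u ∪ Np pos v).card : ℝ) := by
  have hcompl : Nm pos u ∩ Nm pos v = (Np pos u ∪ Np pos v)ᶜ := by
    ext x
    simp only [Finset.mem_inter, mem_Nm_iff, Finset.mem_compl, Finset.mem_union, mem_Np_iff]
    tauto
  have hle : (Np pos u ∪ Np pos v).card ≤ Fintype.card V := by
    simpa using Finset.card_le_univ (Np pos u ∪ Np pos v)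
  unfold corrDist
  rw [hcompl, Finset.card_compl, Nat.cast_sub hle]
  ring_nf

set_option maxHeartbeats 1600000 in
lemma neg_side_bound (pos : V → V → Bool)
    (hsymm : ∀ u v, pos u v = pos v u) (hrefl : ∀ u, pos u u = true)
    (u : V) (C : V → ℕ) :
    (∑ v ∈ Nm pos u,
        ((Np pos u ∩ Np pos v).card : ℝ) / ((Np pos u ∪ Np pos v).card : ℝ))
      ≤ 5 * ((Finset.univ.sup (yC pos C) : ℕ) : ℝ) := by
  classical
  set M := Finset.univ.sup (yC pos C) with hMdef
  have hyM : ∀ w, yC pos C w ≤ M := fun w => Finset.le_sup (Finset.mem_univ w)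
  have hself : ∀ w : V, w ∈ Np pos w := fun w => (mem_Np_iff pos).2 (hrefl w)
  have hu : u ∈ Np pos u := hself u
  set n0 := (Np pos u).card with hn0def
  have hn0pos : 0 < n0 := Finset.card_pos.2 ⟨u, hu⟩
  have hn0posR : (0:ℝ) < (n0:ℝ) := by exact_mod_cast hn0pos
  have hUposN : ∀ v : V, 0 < (Np pos u ∪ Np pos v).card :=
    fun v => Finset.card_pos.2 ⟨u, Finset.mem_union_left _ hu⟩
  have hUpos : ∀ v : V, (0:ℝ) < ((Np pos u ∪ Np pos v).card : ℝ) := fun v => by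
    exact_mod_cast hUposN v
  have hn0leU : ∀ v : V, (n0:ℝ) ≤ ((Np pos u ∪ Np pos v).card : ℝ) := by
    intro v
    exact_mod_cast Finset.card_le_card (Finset.subset_union_left (s₂ := Np pos v))
  set T := (Nm pos u).filter (fun v => ¬ C v = C u) with hTdef
  -- S part
  have hSsum : ∑ v ∈ (Nm pos u).filter (fun v => C v = C u),
      ((Np pos u ∩ Np pos v).card : ℝ) / ((Np pos u ∪ Np pos v).card : ℝ) ≤ (M:ℝ) := by
    have h1 : ∀ v ∈ (Nm pos u).filter (fun v => C v = C u),
        ((Np pos u ∩ Np pos v).card : ℝ) / ((Np pos u ∪ Np pos v).card : ℝ) ≤ 1 := by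
      intro v hv
      apply div_le_one_of_le₀
      · exact_mod_cast Finset.card_le_card (Finset.inter_subset_union)
      · exact (hUpos v).le
    calc ∑ v ∈ (Nm pos u).filter (fun v => C v = C u),
          ((Np pos u ∩ Np pos v).card : ℝ) / ((Np pos u ∪ Np pos v).card : ℝ)
        ≤ ∑ _v ∈ (Nm pos u).filter (fun v => C v = C u), (1:ℝ) := Finset.sum_le_sum h1
      _ = (((Nm pos u).filter (fun v => C v = C u)).card : ℝ) := by simp
      _ ≤ (M:ℝ) := by
          have hcard : ((Nm pos u).filter (fun v => C v = C u)).card ≤ yC pos C u := by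
            apply card_le_yC
            intro v hv
            obtain ⟨hv1, hv2⟩ := Finset.mem_filter.1 hv
            have hnp : ¬ pos u v = true := (mem_Nm_iff pos).1 hv1
            refine ⟨fun h => hnp (h ▸ hrefl u), Or.inr ⟨hnp, hv2.symm⟩⟩
          exact_mod_cast hcard.trans (hyM u)
  -- filters over intersections
  have hfilter_inter : ∀ (v : V) (p : V → Prop) [DecidablePred p],
      (Np pos u ∩ Np pos v).filter p = (Np pos u).filter (fun w => w ∈ Np pos v ∧ p w) := by
    intro v p _
    ext w
    simp only [Finset.mem_filter, Finset.mem_inter]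
    tauto
  -- T2 part
  have hT2N : ∑ v ∈ T, ((Np pos u ∩ Np pos v).filter (fun w => ¬ C w = C v)).card ≤ n0 * M := by
    have hrw : ∀ v ∈ T, ((Np pos u ∩ Np pos v).filter (fun w => ¬ C w = C v)).card
        = ∑ w ∈ Np pos u, if w ∈ Np pos v ∧ ¬ C w = C v then 1 else 0 := by
      intro v _
      rw [hfilter_inter v (fun w => ¬ C w = C v), Finset.card_filter]
    calc ∑ v ∈ T, ((Np pos u ∩ Np pos v).filter (fun w => ¬ C w = C v)).card
        = ∑ v ∈ T, ∑ w ∈ Np pos u, if w ∈ Np pos v ∧ ¬ C w = C v then 1 else 0 :=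
          Finset.sum_congr rfl hrw
      _ = ∑ w ∈ Np pos u, ∑ v ∈ T, if w ∈ Np pos v ∧ ¬ C w = C v then 1 else 0 :=
          Finset.sum_comm
      _ ≤ ∑ _w ∈ Np pos u, M := by
          apply Finset.sum_le_sum
          intro w hw
          rw [← Finset.card_filter]
          refine le_trans (card_le_yC pos C w ?_) (hyM w)
          intro v hv
          obtain ⟨hvT, hv1, hv2⟩ := Finset.mem_filter.1 hv
          obtain ⟨hvm, _⟩ := Finset.mem_filter.1 hvT
          have hnuv : ¬ pos u v = true := (mem_Nm_iff pos).1 hvm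
          have hpuw : pos u w = true := (mem_Np_iff pos).1 hw
          have hvw : v ≠ w := fun h => hnuv (h ▸ hpuw)
          have hpwv : pos w v = true := (hsymm v w) ▸ (mem_Np_iff pos).1 hv1
          exact ⟨hvw, Or.inl ⟨hpwv, fun h => hv2 h⟩⟩
      _ = n0 * M := by rw [Finset.sum_const, smul_eq_mul]
  have hT2 : ∑ v ∈ T, (((Np pos u ∩ Np pos v).filter (fun w => ¬ C w = C v)).card : ℝ)
      / ((Np pos u ∪ Np pos v).card : ℝ) ≤ (M:ℝ) := by
    calc ∑ v ∈ T, (((Np pos u ∩ Np pos v).filter (fun w => ¬ C w = C v)).card : ℝ)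
          / ((Np pos u ∪ Np pos v).card : ℝ)
        ≤ ∑ v ∈ T, (((Np pos u ∩ Np pos v).filter (fun w => ¬ C w = C v)).card : ℝ) / (n0:ℝ) := by
          apply Finset.sum_le_sum
          intro v hv
          apply div_le_div_of_nonneg_left _ hn0posR (hn0leU v)
          positivity
      _ = (∑ v ∈ T, (((Np pos u ∩ Np pos v).filter (fun w => ¬ C w = C v)).card : ℝ)) / (n0:ℝ) := by
          rw [Finset.sum_div]
      _ ≤ ((n0:ℝ) * (M:ℝ)) / (n0:ℝ) := by
          have hcast : (∑ v ∈ T, (((Np pos u ∩ Np pos v).filter (fun w => ¬ C w = C v)).card : ℝ))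
              ≤ (n0:ℝ) * (M:ℝ) := by exact_mod_cast hT2N
          gcongr
      _ = (M:ℝ) := by field_simp
  -- clusters
  set Cl : V → Finset V := fun w => Finset.univ.filter (fun x => C x = C w) with hCl
  have hClself : ∀ w, w ∈ Cl w := by intro w; simp [hCl]
  have hClposN : ∀ w, 0 < (Cl w).card := fun w => Finset.card_pos.2 ⟨w, hClself w⟩
  have hCleq : ∀ v w : V, C w = C v → Cl w = Cl v := by
    intro v w h
    simp only [hCl]
    ext x
    simp [h]
  have hClU : ∀ v : V, (Cl v).card ≤ (Np pos u ∪ Np pos v).card + M := by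
    intro v
    have hsplit : ((Cl v) ∩ (Np pos v)).card + ((Cl v) \ (Np pos v)).card = (Cl v).card :=
      Finset.card_inter_add_card_sdiff _ _
    have h1 : ((Cl v) ∩ (Np pos v)).card ≤ (Np pos u ∪ Np pos v).card :=
      Finset.card_le_card (fun x hx => Finset.mem_union_right _ (Finset.mem_inter.1 hx).2)
    have h2 : ((Cl v) \ (Np pos v)).card ≤ M := by
      refine le_trans (card_le_yC pos C v ?_) (hyM v)
      intro x hx
      obtain ⟨hx1, hx2⟩ := Finset.mem_sdiff.1 hx
      have hCx : C x = C v := by simpa [hCl] using hx1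
      have hnp : ¬ pos v x = true := fun h => hx2 ((mem_Np_iff pos).2 h)
      refine ⟨fun h => hx2 (h ▸ hself v), Or.inr ⟨hnp, hCx.symm⟩⟩
    omega
  set c : V → ℝ := fun w => if 2*M ≤ (Cl w).card then 2/((Cl w).card:ℝ) else 1/(n0:ℝ) with hc
  have hc_nonneg : ∀ w, 0 ≤ c w := by
    intro w
    simp only [hc]
    split <;> positivity
  have hkey : ∀ v ∈ T, ∀ w : V, w ∈ Np pos v → C w = C v →
      1/((Np pos u ∪ Np pos v).card : ℝ) ≤ c w := by
    intro v hv w hw hCwv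
    simp only [hc]
    by_cases h2M : 2*M ≤ (Cl w).card
    · rw [if_pos h2M]
      have hClw : Cl w = Cl v := hCleq v w hCwv
      have h1 : ((Cl w).card : ℝ) ≤ ((Np pos u ∪ Np pos v).card : ℝ) + (M:ℝ) := by
        rw [hClw]
        exact_mod_cast hClU v
      have hM2 : 2*(M:ℝ) ≤ ((Cl w).card : ℝ) := by exact_mod_cast h2M
      have hclpos : (0:ℝ) < ((Cl w).card : ℝ) := by exact_mod_cast hClposN w
      rw [div_le_div_iff₀ (hUpos v) hclpos]
      nlinarith [hUpos v]
    · rw [if_neg h2M]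
      exact one_div_le_one_div_of_le hn0posR (hn0leU v)
  have hB1 : ∀ v ∈ T,
      (((Np pos u ∩ Np pos v).filter (fun w => C w = C v)).card : ℝ)
        / ((Np pos u ∪ Np pos v).card : ℝ)
      ≤ ∑ w ∈ Np pos u, (if w ∈ Np pos v ∧ C w = C v then c w else 0) := by
    intro v hv
    rw [hfilter_inter v (fun w => C w = C v), Finset.card_filter]
    push_cast
    rw [Finset.sum_div]
    apply Finset.sum_le_sum
    intro w hw
    by_cases hP : w ∈ Np pos v ∧ C w = C v
    · rw [if_pos hP, if_pos hP]
      simpa using hkey v hv w hP.1 hP.2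
    · rw [if_neg hP, if_neg hP]
      simp
  have hB2 : ∑ v ∈ T, ∑ w ∈ Np pos u, (if w ∈ Np pos v ∧ C w = C v then c w else 0)
      = ∑ w ∈ Np pos u,
          ((T.filter (fun v => w ∈ Np pos v ∧ C w = C v)).card : ℝ) * c w := by
    rw [Finset.sum_comm]
    apply Finset.sum_congr rfl
    intro w _
    rw [← Finset.sum_filter, Finset.sum_const, nsmul_eq_mul]
  have hcount : ∀ w : V, (T.filter (fun v => w ∈ Np pos v ∧ C w = C v)).card ≤ (Cl w).card := by
    intro w
    apply Finset.card_le_card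
    intro v hv
    obtain ⟨_, _, h2⟩ := Finset.mem_filter.1 hv
    simp [hCl, h2.symm]
  have hcount0 : ∀ w : V, C w = C u →
      (T.filter (fun v => w ∈ Np pos v ∧ C w = C v)).card = 0 := by
    intro w hwu
    rw [Finset.card_eq_zero, Finset.eq_empty_iff_forall_notMem]
    intro v hv
    obtain ⟨hvT, _, h2⟩ := Finset.mem_filter.1 hv
    exact (Finset.mem_filter.1 hvT).2 (h2.symm.trans hwu)
  have hBfinal : ∑ w ∈ Np pos u,
      ((T.filter (fun v => w ∈ Np pos v ∧ C w = C v)).card : ℝ) * c w ≤ 2*(M:ℝ) := by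
    by_cases hcase : M ≤ n0
    · calc ∑ w ∈ Np pos u,
            ((T.filter (fun v => w ∈ Np pos v ∧ C w = C v)).card : ℝ) * c w
          ≤ ∑ w ∈ Np pos u, (if C w = C u then (0:ℝ) else 2) := by
            apply Finset.sum_le_sum
            intro w _
            by_cases hwu : C w = C u
            · rw [if_pos hwu, hcount0 w hwu]
              simp
            · rw [if_neg hwu]
              have h1 : ((T.filter (fun v => w ∈ Np pos v ∧ C w = C v)).card : ℝ)
                  ≤ ((Cl w).card : ℝ) := by exact_mod_cast hcount w
              have h0 : (0:ℝ) ≤ ((T.filter (fun v => w ∈ Np pos v ∧ C w = C v)).card : ℝ) := by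
                positivity
              have hclpos : (0:ℝ) < ((Cl w).card : ℝ) := by exact_mod_cast hClposN w
              simp only [hc]
              by_cases h2M : 2*M ≤ (Cl w).card
              · rw [if_pos h2M]
                have hmul := mul_le_mul_of_nonneg_right h1
                  (by positivity : (0:ℝ) ≤ 2/(((Cl w).card:ℕ):ℝ))
                have hid : (((Cl w).card:ℕ):ℝ) * (2/(((Cl w).card:ℕ):ℝ)) = 2 := by
                  field_simp
                linarith
              · rw [if_neg h2M]
                have hcl2M : ((Cl w).card : ℝ) ≤ 2*(M:ℝ) := by
                  have := Nat.lt_of_not_le h2M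
                  exact_mod_cast this.le
                have hMn0 : (M:ℝ) ≤ (n0:ℝ) := by exact_mod_cast hcase
                rw [mul_one_div, div_le_iff₀ hn0posR]
                nlinarith [h1, hcl2M, hMn0]
        _ = 2 * (((Np pos u).filter (fun w => ¬ C w = C u)).card : ℝ) := by
            rw [Finset.sum_ite, Finset.sum_const, Finset.sum_const]
            simp [mul_comm]
        _ ≤ 2*(M:ℝ) := by
            have hD : ((Np pos u).filter (fun w => ¬ C w = C u)).card ≤ yC pos C u := by
              apply card_le_yC
              intro w hw
              obtain ⟨hw1, hw2⟩ := Finset.mem_filter.1 hw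
              exact ⟨fun h => hw2 (h ▸ rfl), Or.inl ⟨(mem_Np_iff pos).1 hw1, fun h => hw2 h.symm⟩⟩
            have : ((((Np pos u).filter (fun w => ¬ C w = C u)).card : ℝ)) ≤ (M:ℝ) := by
              exact_mod_cast hD.trans (hyM u)
            linarith
    · push_neg at hcase
      have hn0M : (n0:ℝ) ≤ (M:ℝ) := by exact_mod_cast hcase.le
      calc ∑ w ∈ Np pos u,
            ((T.filter (fun v => w ∈ Np pos v ∧ C w = C v)).card : ℝ) * c w
          ≤ ∑ _w ∈ Np pos u, 2*(M:ℝ)/(n0:ℝ) := by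
            apply Finset.sum_le_sum
            intro w _
            have h1 : ((T.filter (fun v => w ∈ Np pos v ∧ C w = C v)).card : ℝ)
                ≤ ((Cl w).card : ℝ) := by exact_mod_cast hcount w
            have h0 : (0:ℝ) ≤ ((T.filter (fun v => w ∈ Np pos v ∧ C w = C v)).card : ℝ) := by
              positivity
            have hclpos : (0:ℝ) < ((Cl w).card : ℝ) := by exact_mod_cast hClposN w
            simp only [hc]
            by_cases h2M : 2*M ≤ (Cl w).card
            · rw [if_pos h2M]
              have hmul := mul_le_mul_of_nonneg_right h1
                (by positivity : (0:ℝ) ≤ 2/(((Cl w).card:ℕ):ℝ))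
              have hid : (((Cl w).card:ℕ):ℝ) * (2/(((Cl w).card:ℕ):ℝ)) = 2 := by
                field_simp
              have h2le : (2:ℝ) ≤ 2*(M:ℝ)/(n0:ℝ) := by
                rw [le_div_iff₀ hn0posR]
                nlinarith
              linarith
            · rw [if_neg h2M]
              have hcl2M : ((Cl w).card : ℝ) ≤ 2*(M:ℝ) := by
                have := Nat.lt_of_not_le h2M
                exact_mod_cast this.le
              rw [mul_one_div, div_le_div_iff₀ hn0posR hn0posR]
              nlinarith
        _ = 2*(M:ℝ) := by
            rw [Finset.sum_const, nsmul_eq_mul]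
            field_simp
            rw [hn0def]
            ring
  -- T1 sum
  have hT1 : ∑ v ∈ T, (((Np pos u ∩ Np pos v).filter (fun w => C w = C v)).card : ℝ)
      / ((Np pos u ∪ Np pos v).card : ℝ) ≤ 2*(M:ℝ) :=
    le_trans (Finset.sum_le_sum hB1) (le_of_eq hB2 |>.trans hBfinal)
  -- combine T
  have hTsum : ∑ v ∈ T,
      ((Np pos u ∩ Np pos v).card : ℝ) / ((Np pos u ∪ Np pos v).card : ℝ) ≤ 3*(M:ℝ) := by
    have hdecomp : ∀ v ∈ T,
        ((Np pos u ∩ Np pos v).card : ℝ) / ((Np pos u ∪ Np pos v).card : ℝ)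
        = (((Np pos u ∩ Np pos v).filter (fun w => C w = C v)).card : ℝ)
            / ((Np pos u ∪ Np pos v).card : ℝ)
          + (((Np pos u ∩ Np pos v).filter (fun w => ¬ C w = C v)).card : ℝ)
            / ((Np pos u ∪ Np pos v).card : ℝ) := by
      intro v _
      rw [← add_div]
      congr 1
      exact_mod_cast (Finset.card_filter_add_card_filter_not
        (s := Np pos u ∩ Np pos v) (p := fun w => C w = C v)).symm
    rw [Finset.sum_congr rfl hdecomp, Finset.sum_add_distrib]
    linarith
  -- final
  have hsplit := Finset.sum_filter_add_sum_filter_not (Nm pos u) (fun v => C v = C u)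
    (fun v => ((Np pos u ∩ Np pos v).card : ℝ) / ((Np pos u ∪ Np pos v).card : ℝ))
  have hM0 : (0:ℝ) ≤ (M:ℝ) := by positivity
  rw [← hsplit]
  linarith

end Helpers


/-- the negative-side fractional cost is at most `5 · max_z y_C(z)`,
and in particular at most `5 · OPT`. -/
theorem sum_minus_le
    {V : Type*} [Fintype V] [DecidableEq V] (pos : V → V → Bool)
    (hsymm : ∀ u v, pos u v = pos v u) (hrefl : ∀ u, pos u u = true)
    (u : V) :
    (∀ C : V → ℕ,
      (∑ v ∈ Nm pos u, (1 - corrDist pos u v)) ≤ 5 * ((Finset.univ.sup (yC pos C) : ℕ) : ℝ)) ∧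
    (∑ v ∈ Nm pos u, (1 - corrDist pos u v)) ≤ 5 * (OPT pos : ℝ) := by
  have hmain : ∀ C : V → ℕ,
      (∑ v ∈ Nm pos u, (1 - corrDist pos u v))
        ≤ 5 * ((Finset.univ.sup (yC pos C) : ℕ) : ℝ) := by
    intro C
    have h := neg_side_bound pos hsymm hrefl u C
    calc ∑ v ∈ Nm pos u, (1 - corrDist pos u v)
        = ∑ v ∈ Nm pos u,
            ((Np pos u ∩ Np pos v).card : ℝ) / ((Np pos u ∪ Np pos v).card : ℝ) :=
          Finset.sum_congr rfl (fun v _ => one_sub_corrDist pos u v)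
      _ ≤ 5 * ((Finset.univ.sup (yC pos C) : ℕ) : ℝ) := h
  refine ⟨hmain, ?_⟩
  have hne : {k : ℕ | ∃ C : V → ℕ, k = Finset.univ.sup (yC pos C)}.Nonempty :=
    ⟨Finset.univ.sup (yC pos (fun _ => 0)), fun _ => 0, rfl⟩
  have hOPT : ∃ C : V → ℕ, OPT pos = Finset.univ.sup (yC pos C) := Nat.sInf_mem hne
  obtain ⟨C, hC⟩ := hOPT
  rw [hC]
  exact hmain C
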